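/- Consider the real Markov chain X_{t+1} = αX_t + ξ_t with probability 1-η and X_{t+1} = X_t + τ with probability η, where α ∈ (0,1), τ > 0, η ∈ (0,1), and ξ_t ≥ 0 i.i.d. Suppose X follows a stationary distribution with all moments finite, M_k = (E[X^k])^{1/k} for X ≥ 0. Then the stationary moments satisfy (1-η)(1-α^k) E[X^k] ≥ η Σ_{j=1}^{k} C(k,j) τ^j E[X^{k-j}] for all k ≥ 1. -/

import Mathlib

open MeasureTheory ProbabilityTheory

private lemma aux_monomial_le {a b : ℝ} (ha : 0 ≤ a) (hb : 0 ≤ b) (m j : ℕ) :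
    a ^ m * b ^ j ≤ a ^ (m + j) + b ^ (m + j) := by
  rcases le_total a b with h | h
  · calc a ^ m * b ^ j ≤ b ^ m * b ^ j := by gcongr
      _ = b ^ (m + j) := by rw [pow_add]
      _ ≤ a ^ (m + j) + b ^ (m + j) := le_add_of_nonneg_left (by positivity)
  · calc a ^ m * b ^ j ≤ a ^ m * a ^ j := by gcongr
      _ = a ^ (m + j) := by rw [pow_add]
      _ ≤ a ^ (m + j) + b ^ (m + j) := le_add_of_nonneg_right (by positivity)

theorem stationary_moments_corrupted_chain
    {Ω : Type*} [MeasurableSpace Ω] (μ : Measure Ω) [IsProbabilityMeasure μ]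
    (X ξ U : Ω → ℝ)
    (hXmeas : Measurable X) (hξmeas : Measurable ξ) (hUmeas : Measurable U)
    (hXnn : ∀ ω, 0 ≤ X ω) (hξnn : ∀ ω, 0 ≤ ξ ω)
    (α τ η : ℝ) (hα0 : 0 < α) (hα1 : α < 1) (hτ : 0 < τ)
    (hη0 : 0 < η) (hη1 : η < 1)
    (hU01 : ∀ ω, U ω = 0 ∨ U ω = 1)
    (hUmean : ∫ ω, U ω ∂μ = η)
    (hindep : IndepFun U (fun ω => (X ω, ξ ω)) μ)
    (hstat : Measure.map
        (fun ω => U ω * (X ω + τ) + (1 - U ω) * (α * X ω + ξ ω)) μ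
      = Measure.map X μ)
    (hmom : ∀ k : ℕ, Integrable (fun ω => X ω ^ k) μ ∧
      Integrable (fun ω => ξ ω ^ k) μ) :
    ∀ k : ℕ, 1 ≤ k →
      η * ∑ j ∈ Finset.Icc 1 k,
          (k.choose j : ℝ) * τ ^ j * ∫ ω, X ω ^ (k - j) ∂μ ≤
        (1 - η) * (1 - α ^ k) * ∫ ω, X ω ^ k ∂μ := by
  intro k hk
  set Y : Ω → ℝ := fun ω => U ω * (X ω + τ) + (1 - U ω) * (α * X ω + ξ ω) with hYdef
  have hYmeas : Measurable Y := by fun_prop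
  -- mixed moments are integrable
  have hmix : ∀ m j : ℕ, Integrable (fun ω => X ω ^ m * ξ ω ^ j) μ := by
    intro m j
    refine Integrable.mono ((hmom (m + j)).1.add (hmom (m + j)).2)
      ((hXmeas.pow_const m).mul (hξmeas.pow_const j)).aestronglyMeasurable ?_
    filter_upwards with ω
    simp only [Pi.add_apply, Real.norm_eq_abs]
    rw [abs_of_nonneg (mul_nonneg (pow_nonneg (hXnn ω) _) (pow_nonneg (hξnn ω) _)),
      abs_of_nonneg (add_nonneg (pow_nonneg (hXnn ω) _) (pow_nonneg (hξnn ω) _))]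
    exact aux_monomial_le (hXnn ω) (hξnn ω) m j
  set A : Ω → ℝ := fun ω => (X ω + τ) ^ k with hAdef
  set B : Ω → ℝ := fun ω => (α * X ω + ξ ω) ^ k with hBdef
  -- binomial expansions
  have hAexp : ∀ ω, A ω = ∑ m ∈ Finset.range (k + 1),
      τ ^ m * X ω ^ (k - m) * (k.choose m : ℝ) := by
    intro ω
    rw [hAdef]
    simp only [add_comm (X ω) τ]
    exact add_pow τ (X ω) k
  have hBexp : ∀ ω, B ω = ∑ m ∈ Finset.range (k + 1),
      (α * X ω) ^ m * ξ ω ^ (k - m) * (k.choose m : ℝ) := by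
    intro ω; exact add_pow (α * X ω) (ξ ω) k
  have hAint : Integrable A μ := by
    rw [show A = fun ω => ∑ m ∈ Finset.range (k + 1),
        τ ^ m * X ω ^ (k - m) * (k.choose m : ℝ) from funext hAexp]
    refine integrable_finset_sum _ fun m _ => ?_
    simpa [mul_assoc, mul_comm, mul_left_comm] using
      (((hmom (k - m)).1.const_mul (τ ^ m)).mul_const ((k.choose m : ℝ)))
  have hBint : Integrable B μ := by
    rw [show B = fun ω => ∑ m ∈ Finset.range (k + 1),
        (α * X ω) ^ m * ξ ω ^ (k - m) * (k.choose m : ℝ) from funext hBexp]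
    refine integrable_finset_sum _ fun m _ => ?_
    have : (fun ω => (α * X ω) ^ m * ξ ω ^ (k - m) * (k.choose m : ℝ))
        = fun ω => (α ^ m * (k.choose m : ℝ)) * (X ω ^ m * ξ ω ^ (k - m)) := by
      funext ω; ring
    rw [this]
    exact (hmix m (k - m)).const_mul _
  -- E[Y^k] = E[X^k]
  have hEY : ∫ ω, Y ω ^ k ∂μ = ∫ ω, X ω ^ k ∂μ := by
    have h1 : ∫ ω, Y ω ^ k ∂μ = ∫ x, x ^ k ∂(Measure.map Y μ) :=
      (integral_map hYmeas.aemeasurable (measurable_id.pow_const k).aestronglyMeasurable).symm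
    have h2 : ∫ ω, X ω ^ k ∂μ = ∫ x, x ^ k ∂(Measure.map X μ) :=
      (integral_map hXmeas.aemeasurable (measurable_id.pow_const k).aestronglyMeasurable).symm
    rw [h1, h2, hYdef, hstat]
  -- pointwise splitting
  have hYsplit : ∀ ω, Y ω ^ k = U ω * A ω + (1 - U ω) * B ω := by
    intro ω
    rcases hU01 ω with h | h <;> simp [hYdef, hAdef, hBdef, h]
  -- independence of U with A and B
  have hU01' : ∀ ω, 0 ≤ U ω ∧ U ω ≤ 1 := by
    intro ω; rcases hU01 ω with h | h <;> simp [h]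
  have hUAint : Integrable (fun ω => U ω * A ω) μ := by
    refine Integrable.mono hAint
      (hUmeas.mul ((hXmeas.add_const τ).pow_const k)).aestronglyMeasurable ?_
    filter_upwards with ω
    rw [Real.norm_eq_abs, Real.norm_eq_abs, abs_mul]
    calc |U ω| * |A ω| ≤ 1 * |A ω| := by
          gcongr
          rw [abs_le]; exact ⟨by linarith [(hU01' ω).1], (hU01' ω).2⟩
      _ = |A ω| := one_mul _
  have hUBint : Integrable (fun ω => U ω * B ω) μ := by
    refine Integrable.mono hBint
      (hUmeas.mul (((hXmeas.const_mul α).add hξmeas).pow_const k)).aestronglyMeasurable ?_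
    filter_upwards with ω
    rw [Real.norm_eq_abs, Real.norm_eq_abs, abs_mul]
    calc |U ω| * |B ω| ≤ 1 * |B ω| := by
          gcongr
          rw [abs_le]; exact ⟨by linarith [(hU01' ω).1], (hU01' ω).2⟩
      _ = |B ω| := one_mul _
  have hindepA : IndepFun U A μ := by
    have : A = (fun p : ℝ × ℝ => (p.1 + τ) ^ k) ∘ (fun ω => (X ω, ξ ω)) := rfl
    rw [this]
    exact hindep.comp measurable_id (by fun_prop)
  have hindepB : IndepFun U B μ := by
    have : B = (fun p : ℝ × ℝ => (α * p.1 + p.2) ^ k) ∘ (fun ω => (X ω, ξ ω)) := rfl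
    rw [this]
    exact hindep.comp measurable_id (by fun_prop)
  have hUA : ∫ ω, U ω * A ω ∂μ = η * ∫ ω, A ω ∂μ := by
    have := hindepA.integral_mul_eq_mul_integral hUmeas.aestronglyMeasurable
      (by fun_prop : AEStronglyMeasurable A μ)
    simpa [hUmean, Pi.mul_apply] using this
  have hUB : ∫ ω, U ω * B ω ∂μ = η * ∫ ω, B ω ∂μ := by
    have := hindepB.integral_mul_eq_mul_integral hUmeas.aestronglyMeasurable
      (by fun_prop : AEStronglyMeasurable B μ)
    simpa [hUmean, Pi.mul_apply] using this
  -- E[X^k] = η E[A] + (1-η) E[B]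
  have hmain : ∫ ω, X ω ^ k ∂μ = η * ∫ ω, A ω ∂μ + (1 - η) * ∫ ω, B ω ∂μ := by
    have h1 : (fun ω => Y ω ^ k) = fun ω => U ω * A ω + (B ω - U ω * B ω) := by
      funext ω; rw [hYsplit ω]; ring
    have h2 : ∫ ω, Y ω ^ k ∂μ
        = ∫ ω, U ω * A ω ∂μ + (∫ ω, B ω ∂μ - ∫ ω, U ω * B ω ∂μ) := by
      have hsub : Integrable (fun ω => B ω - U ω * B ω) μ := hBint.sub hUBint
      rw [h1, integral_add hUAint hsub, integral_sub hBint hUBint]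
    rw [← hEY, h2, hUA, hUB]; ring
  -- E[A] = E[X^k] + S
  have hrange : Finset.range (k + 1) = insert 0 (Finset.Icc 1 k) := by
    ext m; simp; omega
  have hEA : ∫ ω, A ω ∂μ = ∫ ω, X ω ^ k ∂μ
      + ∑ j ∈ Finset.Icc 1 k, (k.choose j : ℝ) * τ ^ j * ∫ ω, X ω ^ (k - j) ∂μ := by
    calc ∫ ω, A ω ∂μ
        = ∫ ω, (∑ m ∈ Finset.range (k + 1),
            τ ^ m * X ω ^ (k - m) * (k.choose m : ℝ)) ∂μ := by
          congr 1; exact funext hAexp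
      _ = ∑ m ∈ Finset.range (k + 1),
            ∫ ω, τ ^ m * X ω ^ (k - m) * (k.choose m : ℝ) ∂μ := by
          refine integral_finset_sum _ fun m _ => ?_
          simpa [mul_assoc, mul_comm, mul_left_comm] using
            (((hmom (k - m)).1.const_mul (τ ^ m)).mul_const ((k.choose m : ℝ)))
      _ = ∑ m ∈ Finset.range (k + 1),
            (k.choose m : ℝ) * τ ^ m * ∫ ω, X ω ^ (k - m) ∂μ := by
          refine Finset.sum_congr rfl fun m _ => ?_
          rw [show (fun ω => τ ^ m * X ω ^ (k - m) * (k.choose m : ℝ))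
              = fun ω => ((k.choose m : ℝ) * τ ^ m) * X ω ^ (k - m) by funext ω; ring]
          rw [integral_const_mul]
      _ = ∫ ω, X ω ^ k ∂μ
          + ∑ j ∈ Finset.Icc 1 k, (k.choose j : ℝ) * τ ^ j * ∫ ω, X ω ^ (k - j) ∂μ := by
          rw [hrange, Finset.sum_insert (by simp)]
          simp
  -- E[B] ≥ α^k E[X^k]
  have hEB : α ^ k * ∫ ω, X ω ^ k ∂μ ≤ ∫ ω, B ω ∂μ := by
    rw [← integral_const_mul]
    refine integral_mono ((hmom k).1.const_mul _) hBint fun ω => ?_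
    have h1 : α ^ k * X ω ^ k = (α * X ω) ^ k := (mul_pow α (X ω) k).symm
    rw [h1, hBdef]
    exact pow_le_pow_left₀ (mul_nonneg hα0.le (hXnn ω)) (le_add_of_nonneg_right (hξnn ω)) k
  -- final algebra
  have hXknn : 0 ≤ ∫ ω, X ω ^ k ∂μ :=
    integral_nonneg fun ω => pow_nonneg (hXnn ω) k
  nlinarith [mul_le_mul_of_nonneg_left hEB (by linarith : (0:ℝ) ≤ 1 - η)]
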